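/- Let ρ₀ be a pure state and σ a density matrix sharing the same projection ϱ onto a subspace of Hermitian matrices, with Tr(ϱ²) ≥ 1/2. Then the squared Bures distance satisfies d_B²(ρ₀, σ) = 2(1 − √Tr(ρ₀σ)) ≤ 2(1 − √(2·Tr(ϱ²) − 1)). -/
import Mathlib


open Matrix ComplexOrder


lemma trace_conjTranspose_mul_self_re_nonneg {n : ℕ} (A : Matrix (Fin n) (Fin n) ℂ) :
    0 ≤ (Matrix.trace (Aᴴ * A)).re := by
  have : (Matrix.trace (Aᴴ * A)).re =
      ∑ i, ∑ j, ((A j i).re * (A j i).re + (A j i).im * (A j i).im) := by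
    simp [Matrix.trace, Matrix.mul_apply, Matrix.diag]
  rw [this]
  apply Finset.sum_nonneg; intro i _
  apply Finset.sum_nonneg; intro j _
  nlinarith [sq_nonneg (A j i).re, sq_nonneg (A j i).im]

lemma trace_sq_le_one {n : ℕ} (σ : Matrix (Fin n) (Fin n) ℂ) (hσ : σ.PosSemidef)
    (ht : σ.trace = 1) : (Matrix.trace (σ * σ)).re ≤ 1 := by
  have h := hσ.1
  set M : Matrix (Fin n) (Fin n) ℂ := (h.eigenvectorUnitary : Matrix (Fin n) (Fin n) ℂ) with hM
  set D : Matrix (Fin n) (Fin n) ℂ := diagonal (RCLike.ofReal ∘ h.eigenvalues) with hD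
  have hU : star M * M = 1 := (Matrix.mem_unitaryGroup_iff').mp h.eigenvectorUnitary.2
  have hspec : σ = M * D * star M := h.spectral_theorem
  have hDtr : ∀ (E : Matrix (Fin n) (Fin n) ℂ), Matrix.trace (M * E * star M) = Matrix.trace E := by
    intro E
    rw [Matrix.trace_mul_cycle, hU, one_mul]
  have key : Matrix.trace (σ * σ) = ∑ i, ((h.eigenvalues i : ℂ))^2 := by
    have hmm : σ * σ = M * (D * D) * star M := by
      rw [hspec]
      have : M * D * star M * (M * D * star M) = M * (D * (star M * M) * D) * star M := by
        noncomm_ring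
      rw [this, hU, mul_one]
    rw [hmm, hDtr, hD, Matrix.diagonal_mul_diagonal, Matrix.trace_diagonal]
    simp [pow_two]
  have htr : ∑ i, h.eigenvalues i = 1 := by
    have : Matrix.trace σ = ∑ i, ((h.eigenvalues i : ℂ)) := by
      conv_lhs => rw [hspec]
      rw [hDtr, hD, Matrix.trace_diagonal]
      simp
    have := congrArg Complex.re (ht ▸ this)
    simpa using this.symm
  have hnn : ∀ i, 0 ≤ h.eigenvalues i := hσ.eigenvalues_nonneg
  have : (Matrix.trace (σ * σ)).re = ∑ i, (h.eigenvalues i)^2 := by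
    rw [key]; simp [← Complex.ofReal_pow]
  rw [this]
  calc ∑ i, (h.eigenvalues i)^2 ≤ ∑ i, h.eigenvalues i := by
        apply Finset.sum_le_sum
        intro i _
        have hle : h.eigenvalues i ≤ 1 := by
          rw [← htr]
          exact Finset.single_le_sum (fun j _ => hnn j) (Finset.mem_univ i)
        nlinarith [hnn i]
    _ = 1 := htr

/-- Bures-distance bound for a pure target state:
d_B²(ρ₀,σ) = 2(1 − √Tr(ρ₀σ)) ≤ 2(1 − √(2 Tr ϱ² − 1)) whenever Tr ϱ² ≥ 1/2. -/
theorem stmt3 {d : ℕ} (ρ₀ σ ϱ : Matrix (Fin d) (Fin d) ℂ)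
    (V : Submodule ℝ (Matrix (Fin d) (Fin d) ℂ))
    (hVH : ∀ A ∈ V, A.IsHermitian)
    (hρ₀ : ρ₀.PosSemidef) (htρ₀ : ρ₀.trace = 1)
    (hpure : Matrix.trace (ρ₀ * ρ₀) = 1)
    (hσ : σ.PosSemidef) (htσ : σ.trace = 1)
    (hϱV : ϱ ∈ V)
    (hρ₀proj : ∀ A ∈ V, Matrix.trace ((ρ₀ - ϱ) * A) = 0)
    (hσproj : ∀ A ∈ V, Matrix.trace ((σ - ϱ) * A) = 0)
    (hhalf : (Matrix.trace (ϱ * ϱ)).re ≥ 1 / 2) :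
    2 * (1 - Real.sqrt ((Matrix.trace (ρ₀ * σ)).re)) ≤
      2 * (1 - Real.sqrt (2 * (Matrix.trace (ϱ * ϱ)).re - 1)) := by
  -- projection identities
  have e1 : Matrix.trace (ρ₀ * ϱ) = Matrix.trace (ϱ * ϱ) := by
    have := hρ₀proj ϱ hϱV
    rw [sub_mul, Matrix.trace_sub] at this
    exact sub_eq_zero.mp this
  have e2 : Matrix.trace (σ * ϱ) = Matrix.trace (ϱ * ϱ) := by
    have := hσproj ϱ hϱV
    rw [sub_mul, Matrix.trace_sub] at this
    exact sub_eq_zero.mp this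
  set S : Matrix (Fin d) (Fin d) ℂ := (ρ₀ + σ) - (ϱ + ϱ) with hSdef
  have hS : S.IsHermitian := (hρ₀.1.add hσ.1).sub ((hVH ϱ hϱV).add (hVH ϱ hϱV))
  have h0 : 0 ≤ (Matrix.trace (Sᴴ * S)).re := trace_conjTranspose_mul_self_re_nonneg S
  rw [hS] at h0
  have hSS : S * S = ρ₀*ρ₀ + ρ₀*σ + σ*ρ₀ + σ*σ + (ϱ*ϱ + ϱ*ϱ + ϱ*ϱ + ϱ*ϱ) -
      (ρ₀*ϱ + ϱ*ρ₀ + σ*ϱ + ϱ*σ + ρ₀*ϱ + ϱ*ρ₀ + σ*ϱ + ϱ*σ) := by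
    rw [hSdef]; noncomm_ring
  have htot : Matrix.trace (S * S) =
      1 + 2 * Matrix.trace (ρ₀ * σ) + Matrix.trace (σ * σ) - 4 * Matrix.trace (ϱ * ϱ) := by
    rw [hSS]
    simp only [Matrix.trace_add, Matrix.trace_sub]
    rw [Matrix.trace_mul_comm ϱ ρ₀, Matrix.trace_mul_comm ϱ σ, Matrix.trace_mul_comm σ ρ₀,
      e1, e2, hpure]
    ring
  have hσσ : (Matrix.trace (σ * σ)).re ≤ 1 := trace_sq_le_one σ hσ htσ
  have hm : 2 * (Matrix.trace (ϱ * ϱ)).re - 1 ≤ (Matrix.trace (ρ₀ * σ)).re := by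
    rw [htot] at h0
    simp [Complex.add_re, Complex.sub_re, Complex.mul_re] at h0
    linarith
  have := Real.sqrt_le_sqrt hm
  linarith
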